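/- Every stable monomial ideal I ⊆ R has linear quotients: there exists an ordering (m_1,…,m_k) of the minimal monomial generators of I such that for every j the colon ideal ⟨m_1,…,m_{j−1}⟩ : m_j is generated by a subset of the variables. -/

import Mathlib

open MvPolynomial

/-- The monomial ideal generated by a set of exponent vectors. -/
noncomputable def genIdeal (K : Type*) [Field K] {n : ℕ} (ms : Set (Fin n →₀ ℕ)) :
    Ideal (MvPolynomial (Fin n) K) :=
  Ideal.span ((fun u => MvPolynomial.monomial u (1 : K)) '' ms)

/-- The colon ideal `⟨m_1, …, m_{j-1}⟩ : m_j`. -/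
noncomputable def colonJ (K : Type*) [Field K] {n k : ℕ} (m : Fin k → (Fin n →₀ ℕ))
    (j : Fin k) : Ideal (MvPolynomial (Fin n) K) :=
  Submodule.colon (genIdeal K {u | ∃ i : Fin k, i < j ∧ u = m i})
    (Ideal.span {MvPolynomial.monomial (m j) (1 : K)})

/-- `I` has linear quotients w.r.t. the ordering `m_1,…,m_k` of its generators:
each colon ideal is generated by a subset of the variables. -/
def HasLinearQuotients (K : Type*) [Field K] {n k : ℕ}
    (m : Fin k → (Fin n →₀ ℕ)) : Prop :=
  ∀ j : Fin k, ∃ S : Set (Fin n),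
    colonJ K m j = Ideal.span ((fun s => (MvPolynomial.X s : MvPolynomial (Fin n) K)) '' S)

/-- `set(m_j) = {i : x_i ∈ ⟨m_1,…,m_{j-1}⟩ : m_j}`. -/
def mset (K : Type*) [Field K] {n k : ℕ} (m : Fin k → (Fin n →₀ ℕ)) (j : Fin k) :
    Set (Fin n) :=
  {t | (MvPolynomial.X t : MvPolynomial (Fin n) K) ∈ colonJ K m j}

/-- The `m i` are minimal monomial generators: none divides another. -/
def MinimalGens {n k : ℕ} (m : Fin k → (Fin n →₀ ℕ)) : Prop :=
  ∀ i j : Fin k, m i ≤ m j → i = j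

/-- `b` is the decomposition function: for a monomial `u ∈ I`, `b u` is the smallest
index `j` with `u ∈ ⟨m_1,…,m_j⟩`. -/
def IsDecompositionFunction (K : Type*) [Field K] {n k : ℕ}
    (m : Fin k → (Fin n →₀ ℕ)) (b : (Fin n →₀ ℕ) → Fin k) : Prop :=
  ∀ u : Fin n →₀ ℕ, MvPolynomial.monomial u (1 : K) ∈ genIdeal K (Set.range m) →
    (MvPolynomial.monomial u (1 : K) ∈ genIdeal K {v | ∃ i : Fin k, i ≤ b u ∧ v = m i}) ∧
    (∀ j : Fin k,
      MvPolynomial.monomial u (1 : K) ∈ genIdeal K {v | ∃ i : Fin k, i ≤ j ∧ v = m i} →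
      b u ≤ j)

/-- The decomposition function is regular: `set(b(x_t·m)) ⊆ set(m)` for every
generator `m` and every `t ∈ set(m)`. -/
def IsRegularDecomp (K : Type*) [Field K] {n k : ℕ}
    (m : Fin k → (Fin n →₀ ℕ)) (b : (Fin n →₀ ℕ) → Fin k) : Prop :=
  ∀ j : Fin k, ∀ t ∈ mset K m j,
    mset K m (b (m j + Finsupp.single t 1)) ⊆ mset K m j

/-! ### Auxiliary material for the proof -/

section Aux

variable (K : Type*) [Field K] {n : ℕ}

lemma mem_genIdeal_iff {ms : Set (Fin n →₀ ℕ)} {p : MvPolynomial (Fin n) K} :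
    p ∈ genIdeal K ms ↔ ∀ v ∈ p.support, ∃ u ∈ ms, u ≤ v :=
  MvPolynomial.mem_ideal_span_monomial_image

lemma monomial_mem_genIdeal_iff {ms : Set (Fin n →₀ ℕ)} {v : Fin n →₀ ℕ} :
    (monomial v (1:K)) ∈ genIdeal K ms ↔ ∃ u ∈ ms, u ≤ v := by
  classical
  rw [mem_genIdeal_iff, support_monomial]
  simp

lemma mem_colonJ_iff {k : ℕ} (m : Fin k → (Fin n →₀ ℕ)) (j : Fin k)
    (p : MvPolynomial (Fin n) K) :
    p ∈ colonJ K m j ↔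
      p * monomial (m j) 1 ∈ genIdeal K {u | ∃ i : Fin k, i < j ∧ u = m i} := by
  rw [colonJ, Submodule.mem_colon]
  constructor
  · intro h
    have := h _ (Ideal.subset_span rfl)
    simpa [smul_eq_mul] using this
  · intro h q hq
    obtain ⟨c, rfl⟩ := Ideal.mem_span_singleton'.mp hq
    have : p • (c * monomial (m j) (1:K)) = c * (p * monomial (m j) 1) := by
      simp only [smul_eq_mul]; ring
    rw [this]
    exact Ideal.mul_mem_left _ _ h

end Aux

/-- weight function used for termination of the canonical-decomposition search -/
def mu {n : ℕ} (u : Fin n →₀ ℕ) : ℕ := u.sum fun s c => c * s.val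

lemma mu_add {n : ℕ} (u v : Fin n →₀ ℕ) : mu (u + v) = mu u + mu v := by
  classical
  exact Finsupp.sum_add_index (by simp) (by intros; ring)

lemma mu_single {n : ℕ} (t : Fin n) : mu (Finsupp.single t 1) = t.val := by
  classical
  simp [mu, Finsupp.sum_single_index]

lemma mu_mono {n : ℕ} {u v : Fin n →₀ ℕ} (h : u ≤ v) : mu u ≤ mu v := by
  obtain ⟨w, rfl⟩ := le_iff_exists_add.mp h
  rw [mu_add]; omega

/-- Eliahou–Kervaire canonical divisor: every monomial `w` in a stable ideal is divisible
by a minimal generator `u` such that the complementary factor only involves variables of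
index at least `max(u)`. -/
lemma exists_canon (K : Type*) [Field K] {n : ℕ} (gens : Finset (Fin n →₀ ℕ))
    (hstable : ∀ u : Fin n →₀ ℕ,
      MvPolynomial.monomial u (1 : K) ∈ genIdeal K ↑gens →
      ∀ hne : u.support.Nonempty, ∀ i : Fin n, i < u.support.max' hne →
        MvPolynomial.monomial
            (u + Finsupp.single i 1 - Finsupp.single (u.support.max' hne) 1) (1 : K) ∈
          genIdeal K ↑gens)
    (w : Fin n →₀ ℕ) :
    ∀ N : ℕ, ∀ u0 : Fin n →₀ ℕ, mu u0 ≤ N → u0 ∈ gens → u0 ≤ w →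
      ∃ u ∈ gens, u ≤ w ∧ ∀ s, u s < w s → ∀ r, u r ≠ 0 → r ≤ s := by
  intro N
  induction N using Nat.strong_induction_on with
  | _ N ih =>
    intro u0 hmu h0 hle
    by_cases hc : ∀ s, u0 s < w s → ∀ r, u0 r ≠ 0 → r ≤ s
    · exact ⟨u0, h0, hle, hc⟩
    · push_neg at hc
      obtain ⟨s, hsw, r, hr, hrs⟩ := hc
      have hne : u0.support.Nonempty := ⟨r, Finsupp.mem_support_iff.mpr hr⟩
      set M := u0.support.max' hne with hM
      have hrM : r ≤ M := Finset.le_max' _ r (Finsupp.mem_support_iff.mpr hr)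
      have hsM : s < M := lt_of_lt_of_le hrs hrM
      have hMpos : 1 ≤ u0 M :=
        Nat.one_le_iff_ne_zero.mpr (Finsupp.mem_support_iff.mp (u0.support.max'_mem hne))
      have hmem : (monomial u0 (1:K)) ∈ genIdeal K ↑gens :=
        (monomial_mem_genIdeal_iff K).mpr ⟨u0, by simpa using h0, le_rfl⟩
      obtain ⟨v, hv, hvle⟩ := (monomial_mem_genIdeal_iff K).mp (hstable u0 hmem hne s hsM)
      have hvgens : v ∈ gens := by simpa using hv
      set u' := u0 + Finsupp.single s 1 - Finsupp.single M 1 with hu'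
      have happ : ∀ x, u' x = u0 x + (if s = x then 1 else 0) - (if M = x then 1 else 0) := by
        intro x
        simp [hu', Finsupp.tsub_apply, Finsupp.add_apply, Finsupp.single_apply]
      have hu'w : u' ≤ w := by
        rw [Finsupp.le_def]
        intro x
        have h1 := happ x
        have h2 := Finsupp.le_def.mp hle x
        rcases eq_or_ne s x with rfl | hsx
        · have hMs : M ≠ s := hsM.ne'
          rw [if_pos rfl, if_neg hMs] at h1
          omega
        · rw [if_neg hsx] at h1
          rcases eq_or_ne M x with rfl | hMx
          · rw [if_pos rfl] at h1; omega
          · rw [if_neg hMx] at h1; omega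
      have hkey : u' + Finsupp.single M 1 = u0 + Finsupp.single s 1 := by
        ext x
        have h1 := happ x
        simp only [Finsupp.add_apply, Finsupp.single_apply]
        rcases eq_or_ne M x with rfl | hMx
        · have : s ≠ M := hsM.ne
          rw [if_neg this] at h1 ⊢
          rw [if_pos rfl] at h1 ⊢
          omega
        · rw [if_neg hMx] at h1 ⊢
          omega
      have hmu' : mu u' < mu u0 := by
        have : mu u' + M.val = mu u0 + s.val := by
          rw [← mu_single (n := n) M, ← mu_single (n := n) s, ← mu_add, ← mu_add, hkey]
        have hsv : s.val < M.val := hsM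
        omega
      have hvlt : mu v < N := lt_of_lt_of_le (lt_of_le_of_lt (mu_mono hvle) hmu') hmu
      exact ih (mu v) hvlt v le_rfl hvgens (hvle.trans hu'w)

lemma lex_lt_iff' {n : ℕ} {u v : Fin n →₀ ℕ} :
    toLex u < toLex v ↔ ∃ j, (∀ d, d < j → u d = v d) ∧ u j < v j :=
  Finsupp.lex_def

/-- Key lex comparison: the canonical divisor of `x_t · m_j / x_{max}` is lex-larger
than `m_j`. -/
lemma canon_lex {n : ℕ} (gens : Finset (Fin n →₀ ℕ))
    (hmin : ∀ u ∈ gens, ∀ v ∈ gens, u ≤ v → u = v)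
    {mj u : Fin n →₀ ℕ} (hmj : mj ∈ gens) (hu : u ∈ gens)
    (hne : mj.support.Nonempty) {t : Fin n} (ht : t < mj.support.max' hne)
    {w : Fin n →₀ ℕ}
    (hwdef : w = mj + Finsupp.single t 1 - Finsupp.single (mj.support.max' hne) 1)
    (hule : u ≤ w)
    (hcond : ∀ s, u s < w s → ∀ r, u r ≠ 0 → r ≤ s) :
    toLex mj < toLex u := by
  classical
  set M := mj.support.max' hne with hM
  have hMpos : 1 ≤ mj M :=
    Nat.one_le_iff_ne_zero.mpr (Finsupp.mem_support_iff.mp (mj.support.max'_mem hne))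
  have htM : t ≠ M := ht.ne
  have hMt : M ≠ t := ht.ne'
  have happ : ∀ x, w x = mj x + (if t = x then 1 else 0) - (if M = x then 1 else 0) := by
    intro x; simp [hwdef, Finsupp.tsub_apply, Finsupp.add_apply, Finsupp.single_apply]
  have hwt : w t = mj t + 1 := by
    have := happ t; rw [if_pos rfl, if_neg hMt] at this; omega
  have hwM : w M = mj M - 1 := by
    have := happ M; rw [if_neg htM, if_pos rfl] at this; omega
  rcases lt_trichotomy (toLex mj) (toLex u) with h | h | h
  · exact h
  · exfalso
    have heq : mj = u := toLex.injective h
    have hle := Finsupp.le_def.mp hule M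
    rw [← heq] at hle
    omega
  · exfalso
    obtain ⟨p, h1, h2⟩ := lex_lt_iff'.mp h
    have hulemj : u ≤ mj := by
      rcases eq_or_ne p M with rfl | hpM
      · -- first difference at M; use position t < M
        have hut : u t = mj t := h1 t ht
        have hsupp := hcond t (by omega)
        rw [Finsupp.le_def]
        intro x
        by_cases hx : x ≤ t
        · rw [h1 x (lt_of_le_of_lt hx ht)]
        · have : u x = 0 := by
            by_contra hne0
            exact hx (hsupp x hne0)
          omega
      · have hwp : mj p ≤ w p := by
          have := happ p
          rw [if_neg (Ne.symm hpM)] at this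
          split_ifs at this <;> omega
        have hsupp := hcond p (by omega)
        rw [Finsupp.le_def]
        intro x
        rcases lt_trichotomy x p with hx | rfl | hx
        · rw [h1 x hx]
        · omega
        · have : u x = 0 := by
            by_contra hne0
            exact absurd (hsupp x hne0) (not_le.mpr hx)
          omega
    have := hmin u hu mj hmj hulemj
    rw [this] at h2
    omega

/-- Enumeration of the generators in (lexicographically) decreasing order. -/
noncomputable def enumD {n : ℕ} (gens : Finset (Fin n →₀ ℕ)) : Fin gens.card → (Fin n →₀ ℕ) :=
  fun i => ofLex ((gens.map (toLex (α := Fin n →₀ ℕ)).toEmbedding).orderIsoOfFin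
    (by rw [Finset.card_map]) i.rev : Lex (Fin n →₀ ℕ))

lemma enumD_mem {n : ℕ} (gens : Finset (Fin n →₀ ℕ)) (i : Fin gens.card) :
    enumD gens i ∈ gens := by
  have h := ((gens.map (toLex (α := Fin n →₀ ℕ)).toEmbedding).orderIsoOfFin
    (by rw [Finset.card_map]) i.rev).2
  rw [Finset.mem_map] at h
  obtain ⟨a, ha, hae⟩ := h
  simpa [enumD, ← hae] using ha

lemma enumD_anti {n : ℕ} (gens : Finset (Fin n →₀ ℕ)) {i j : Fin gens.card} (h : i < j) :
    toLex (enumD gens j) < toLex (enumD gens i) := by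
  have := ((gens.map (toLex (α := Fin n →₀ ℕ)).toEmbedding).orderIsoOfFin
    (by rw [Finset.card_map])).strictMono (Fin.rev_lt_rev.mpr h)
  simpa [enumD, Subtype.coe_lt_coe] using this

lemma enumD_surj {n : ℕ} (gens : Finset (Fin n →₀ ℕ)) {u : Fin n →₀ ℕ} (hu : u ∈ gens) :
    ∃ i, enumD gens i = u := by
  have hmem : (toLex u : Lex (Fin n →₀ ℕ)) ∈ gens.map (toLex (α := Fin n →₀ ℕ)).toEmbedding := by
    rw [Finset.mem_map]; exact ⟨u, hu, rfl⟩
  obtain ⟨i', hi'⟩ := ((gens.map (toLex (α := Fin n →₀ ℕ)).toEmbedding).orderIsoOfFin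
    (by rw [Finset.card_map])).surjective ⟨_, hmem⟩
  refine ⟨i'.rev, ?_⟩
  simp [enumD, Fin.rev_rev, hi']

/-- every stable monomial ideal has linear quotients: there is an
ordering `m : Fin (gens.card) → (Fin n →₀ ℕ)` of the minimal monomial generators
`gens` such that every colon ideal `⟨m_1,…,m_{j−1}⟩ : m_j` is generated by a subset of
the variables.  Stability: for every monomial `w ∈ I` and every `i < max(w)`, the
monomial `x_i·w/x_{max(w)}` lies in `I`. -/
theorem stmt19 (K : Type*) [Field K] {n : ℕ} (gens : Finset (Fin n →₀ ℕ))
    (hmin : ∀ u ∈ gens, ∀ v ∈ gens, u ≤ v → u = v)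
    (hstable : ∀ u : Fin n →₀ ℕ,
      MvPolynomial.monomial u (1 : K) ∈ genIdeal K ↑gens →
      ∀ hne : u.support.Nonempty, ∀ i : Fin n, i < u.support.max' hne →
        MvPolynomial.monomial
            (u + Finsupp.single i 1 - Finsupp.single (u.support.max' hne) 1) (1 : K) ∈
          genIdeal K ↑gens) :
    ∃ m : Fin gens.card → (Fin n →₀ ℕ),
      Function.Injective m ∧ (∀ a, m a ∈ gens) ∧
      HasLinearQuotients K m := by
  classical
  have hinj : Function.Injective (enumD gens) := by
    intro a b hab
    by_contra hab'
    rcases lt_or_gt_of_ne hab' with h | h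
    · exact absurd (enumD_anti gens h) (by rw [hab]; exact lt_irrefl _)
    · exact absurd (enumD_anti gens h) (by rw [hab]; exact lt_irrefl _)
  refine ⟨enumD gens, hinj, fun a => enumD_mem gens a, ?_⟩
  intro j
  by_cases hne : (enumD gens j).support.Nonempty
  · refine ⟨{t | t < (enumD gens j).support.max' hne}, ?_⟩
    set M := (enumD gens j).support.max' hne with hM
    apply le_antisymm
    · -- colon ⊆ span of variables
      intro p hp
      rw [mem_colonJ_iff, mem_genIdeal_iff] at hp
      rw [MvPolynomial.mem_ideal_span_X_image]
      intro v hv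
      have hvm : (v + enumD gens j) ∈ (p * monomial (enumD gens j) (1:K)).support := by
        rw [MvPolynomial.mem_support_iff, MvPolynomial.coeff_mul_monomial, mul_one]
        exact MvPolynomial.mem_support_iff.mp hv
      obtain ⟨u, ⟨i, hij, rfl⟩, hle⟩ := hp _ hvm
      have hlex := enumD_anti gens hij
      obtain ⟨q, h1, h2⟩ := lex_lt_iff'.mp hlex
      refine ⟨q, ?_, ?_⟩
      · show q < M
        by_contra hq
        push_neg at hq
        have hjile : enumD gens j ≤ enumD gens i := by
          rw [Finsupp.le_def]; intro x
          rcases lt_trichotomy x q with hx | rfl | hx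
          · rw [h1 x hx]
          · omega
          · have : (enumD gens j) x = 0 := by
              by_contra h0
              have := Finset.le_max' _ x (Finsupp.mem_support_iff.mpr h0)
              rw [← hM] at this
              have : x ≤ q := le_trans this hq
              omega
            omega
        have heq := hmin _ (enumD_mem gens j) _ (enumD_mem gens i) hjile
        rw [heq] at h2
        omega
      · have h3 := Finsupp.le_def.mp hle q
        have h4 : (v + enumD gens j) q = v q + enumD gens j q := Finsupp.add_apply _ _ _
        omega
    · -- span of variables ⊆ colon
      rw [Ideal.span_le]
      rintro x ⟨t, ht, rfl⟩
      have ht' : t < M := ht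
      rw [SetLike.mem_coe, mem_colonJ_iff]
      have hXmul : (X t : MvPolynomial (Fin n) K) * monomial (enumD gens j) 1
          = monomial (Finsupp.single t 1 + enumD gens j) 1 := by
        have hX : (X t : MvPolynomial (Fin n) K) = monomial (Finsupp.single t 1) 1 := rfl
        rw [hX, MvPolynomial.monomial_mul, one_mul]
      rw [hXmul, monomial_mem_genIdeal_iff]
      have hmemj : (monomial (enumD gens j) (1:K)) ∈ genIdeal K ↑gens :=
        (monomial_mem_genIdeal_iff K).mpr ⟨enumD gens j, by simpa using enumD_mem gens j, le_rfl⟩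
      obtain ⟨u0, hu0, hu0le⟩ :=
        (monomial_mem_genIdeal_iff K).mp (hstable (enumD gens j) hmemj hne t ht')
      obtain ⟨u, hu, hule, hcond⟩ :=
        exists_canon K gens hstable _ (mu u0) u0 le_rfl (by simpa using hu0) hu0le
      have hlex := canon_lex gens hmin (enumD_mem gens j) hu hne ht' rfl hule hcond
      obtain ⟨l, rfl⟩ := enumD_surj gens hu
      have hlj : l < j := by
        by_contra hl
        push_neg at hl
        rcases eq_or_lt_of_le hl with heq | hl'
        · rw [heq] at hlex; exact lt_irrefl _ hlex
        · exact absurd (enumD_anti gens hl') (not_lt.mpr hlex.le)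
      refine ⟨enumD gens l, ⟨l, hlj, rfl⟩, ?_⟩
      rw [Finsupp.le_def]
      intro x
      have h5 := Finsupp.le_def.mp hule x
      simp only [Finsupp.tsub_apply, Finsupp.add_apply, Finsupp.single_apply] at h5 ⊢
      split_ifs at h5 ⊢ <;> omega
  · refine ⟨∅, ?_⟩
    have hmj0 : enumD gens j = 0 := by
      rwa [Finset.not_nonempty_iff_eq_empty, Finsupp.support_eq_empty] at hne
    have hset : {u | ∃ i, i < j ∧ u = enumD gens i} = (∅ : Set (Fin n →₀ ℕ)) := by
      ext u
      simp only [Set.mem_setOf_eq, Set.mem_empty_iff_false, iff_false, not_exists]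
      rintro i ⟨hij, rfl⟩
      have hle : enumD gens j ≤ enumD gens i := by rw [hmj0]; exact zero_le
      have heq := hmin _ (enumD_mem gens j) _ (enumD_mem gens i) hle
      rw [hinj heq] at hij
      exact lt_irrefl _ hij
    apply le_antisymm
    · intro p hp
      rw [mem_colonJ_iff, hset] at hp
      simp only [genIdeal, Set.image_empty, Ideal.span_empty, Ideal.mem_bot] at hp
      have hp0 : p = 0 := by
        rcases mul_eq_zero.mp hp with h | h
        · exact h
        · exact absurd h (by simp [MvPolynomial.monomial_eq_zero])
      rw [hp0]
      exact Submodule.zero_mem _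
    · simp only [Set.image_empty, Ideal.span_empty]
      exact bot_le
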